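/- arXiv:math/0111298 — 2 statements merged into one kernel-verified Lean document; each statement's English description precedes it below -/
import Mathlib

section
/- For coprime integers p > 1 and q, (1/p) · Σ' 1/((ζ−1)(ζ^q−1)) = −s(q,p) + (p−1)/(4p), where the primed sum runs over all p-th roots of unity ζ ≠ 1 in ℂ. -/
open scoped Classical

/-- The Dedekind symbol `((x))`. -/
noncomputable def dedekindSymbol (x : ℝ) : ℝ :=
  if ∃ n : ℤ, x = (n : ℝ) then 0 else Int.fract x - 1/2

/-- The classical Dedekind sum `s(q,p)` with integer first argument. -/
noncomputable def dedekindSum (q : ℤ) (p : ℕ) : ℝ :=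
  ∑ μ ∈ Finset.range p,
    dedekindSymbol ((μ : ℝ) / (p : ℝ)) * dedekindSymbol ((q : ℝ) * (μ : ℝ) / (p : ℝ))

/-- The set of `p`-th roots of unity in `ℂ` different from `1`. -/
noncomputable def nontrivialRootsOfUnity (p : ℕ) : Finset ℂ :=
  (Polynomial.nthRoots p (1 : ℂ)).toFinset.erase 1

open Finset Polynomial

private lemma sum_mul_pow_aux (x : ℂ) (n : ℕ) :
    (x - 1) * ∑ j ∈ range n, (j : ℂ) * x ^ j
      = ((n : ℂ) - 1) * x ^ n + 1 - ∑ j ∈ range n, x ^ j := by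
  induction n with
  | zero => simp
  | succ n ih =>
    rw [sum_range_succ, sum_range_succ (f := fun j => x ^ j), mul_add, ih]
    push_cast; ring

private lemma key_sum (p : ℕ) (ζ : ℂ) (h1 : ζ ^ p = 1) (hne : ζ ≠ 1) :
    (∑ j ∈ range p, (j : ℂ) * ζ ^ j) * (ζ - 1) = p := by
  have hg : ∑ j ∈ range p, ζ ^ j = 0 := by
    rw [geom_sum_eq hne, h1]; simp
  have h := sum_mul_pow_aux ζ p
  rw [hg, h1] at h
  linear_combination h

private lemma emod_add_neg_emod {a p : ℤ} (hp : 0 < p) (h : ¬ p ∣ a) :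
    a % p + (-a) % p = p := by
  have h1 : (a % p + (-a) % p) % p = 0 := by
    rw [Int.emod_add_emod, add_comm, Int.emod_add_emod]
    simp
  have h2 : 0 ≤ a % p := Int.emod_nonneg a hp.ne'
  have h3 : a % p < p := Int.emod_lt_of_pos a hp
  have h4 : 0 ≤ (-a) % p := Int.emod_nonneg _ hp.ne'
  have h5 : (-a) % p < p := Int.emod_lt_of_pos _ hp
  have h6 : 0 < a % p := by
    rcases h2.lt_or_eq with h' | h'
    · exact h'
    · exact absurd (Int.dvd_of_emod_eq_zero h'.symm) h
  have h7 : 0 < (-a) % p := by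
    rcases h4.lt_or_eq with h' | h'
    · exact h'
    · exact absurd ((dvd_neg).mp (Int.dvd_of_emod_eq_zero h'.symm)) h
  obtain ⟨t, ht⟩ := Int.dvd_of_emod_eq_zero h1
  have ht1 : t = 1 := by nlinarith
  rw [ht1, mul_one] at ht
  linarith

private lemma sum_range_split {M : Type*} [AddCommMonoid M] (p : ℕ) (hp : 0 < p) (f : ℕ → M) :
    ∑ k ∈ Finset.range p, f k = f 0 + ∑ k ∈ Finset.Ico 1 p, f k := by
  rw [Finset.range_eq_Ico, Finset.sum_eq_sum_Ico_succ_bot hp]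

theorem fourier_dedekind_sum (p : ℕ) (q : ℤ) (hp : 1 < p) (hcop : Int.gcd q (p : ℤ) = 1) :
    (1 / (p : ℂ)) * ∑ ζ ∈ nontrivialRootsOfUnity p, 1 / ((ζ - 1) * (ζ ^ q - 1)) =
      ((-dedekindSum q p + ((p : ℝ) - 1) / (4 * (p : ℝ)) : ℝ) : ℂ) := by
  have hp0 : 0 < p := by omega
  have hpZ : (0 : ℤ) < (p : ℤ) := by exact_mod_cast hp0
  have hpR : (p : ℝ) ≠ 0 := by positivity
  have hpC : (p : ℂ) ≠ 0 := Nat.cast_ne_zero.mpr hp0.ne'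
  -- integer data
  set G : ℤ := ∑ k ∈ Finset.range p, (k : ℤ) with hGdef
  set A : ℤ := ∑ k ∈ Finset.range p, (k : ℤ) * ((q * k) % p) with hAdef
  set A' : ℤ := ∑ k ∈ Finset.range p, (k : ℤ) * ((-(q * k)) % p) with hA'def
  set C : ℤ := ∑ k ∈ Finset.range p, ((q * k) % p) with hCdef
  -- p does not divide q*k for 0 < k < p
  have hndvd : ∀ k : ℕ, 0 < k → k < p → ¬ ((p : ℤ) ∣ q * k) := by
    intro k hk1 hk2 hdvd
    have hgcd : Int.gcd (p : ℤ) q = 1 := by rwa [Int.gcd_comm]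
    have hpk : (p : ℤ) ∣ (k : ℤ) := Int.dvd_of_dvd_mul_right_of_gcd_one hdvd hgcd
    have : p ∣ k := Int.natCast_dvd_natCast.mp hpk
    have := Nat.le_of_dvd hk1 this
    omega
  -- Gauss sum
  have hG : 2 * G = p * ((p : ℤ) - 1) := by
    have h := Finset.sum_range_id_mul_two p
    have hple : 1 ≤ p := hp0
    zify [hple] at h
    rw [hGdef]
    push_cast at h
    linarith
  -- A + A' = p * G
  have hAA' : A + A' = (p : ℤ) * G := by
    rw [hAdef, hA'def, hGdef, ← Finset.sum_add_distrib, Finset.mul_sum]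
    apply Finset.sum_congr rfl
    intro k hk
    rcases Nat.eq_zero_or_pos k with hk0 | hk0
    · subst hk0; simp
    · have := emod_add_neg_emod hpZ (hndvd k hk0 (mem_range.mp hk))
      linear_combination (k : ℤ) * this
  -- C = G
  have hCG : C = G := by
    set C' : ℤ := ∑ k ∈ Finset.range p, ((-(q * k)) % p) with hC'def
    have hCC' : C + C' = (p : ℤ) * ((p : ℤ) - 1) := by
      have e1 : ∀ k ∈ Finset.Ico 1 p, ((q * k) % p + (-(q * (k : ℤ))) % p) = (p : ℤ) := by
        intro k hk
        rw [mem_Ico] at hk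
        exact emod_add_neg_emod hpZ (hndvd k (by omega) hk.2)
      rw [hCdef, hC'def, ← Finset.sum_add_distrib,
        sum_range_split p hp0 (fun k => (q * (k : ℤ)) % p + (-(q * (k : ℤ))) % p),
        Finset.sum_congr rfl e1]
      simp only [Nat.cast_zero, mul_zero, Int.zero_emod, neg_zero, add_zero, zero_add,
        Finset.sum_const, Nat.card_Ico, nsmul_eq_mul]
      have h2 : ((p - 1 : ℕ) : ℤ) = (p : ℤ) - 1 := by omega
      rw [h2]; ring
    have hC'C : C' = C := by
      rw [hC'def, hCdef, sum_range_split p hp0 (fun k => (-(q * k)) % p),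
        sum_range_split p hp0 (fun k => (q * k) % p)]
      simp only [Nat.cast_zero, mul_zero, Int.zero_emod, neg_zero, zero_add]
      refine Finset.sum_nbij' (i := fun k => p - k) (j := fun k => p - k) ?_ ?_ ?_ ?_ ?_
      · intro a ha; rw [mem_Ico] at ha ⊢; omega
      · intro a ha; rw [mem_Ico] at ha ⊢; omega
      · intro a ha; rw [mem_Ico] at ha; omega
      · intro a ha; rw [mem_Ico] at ha; omega
      · intro a ha
        rw [mem_Ico] at ha
        have h3 : ((p - a : ℕ) : ℤ) = (p : ℤ) - a := by omega
        rw [h3]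
        have h4 : q * ((p : ℤ) - a) = -(q * a) + (p : ℤ) * q := by ring
        rw [h4, Int.add_mul_emod_self_left]
    omega
  -- real side
  have hs : dedekindSum q p * (4 * (p : ℝ)^2)
      = ((4 * A - 2 * (p : ℤ) * G - 2 * (p : ℤ) * C + (p : ℤ)^2 * ((p : ℤ) - 1) : ℤ) : ℝ) := by
    have hterm : ∀ μ ∈ Finset.Ico 1 p,
        (dedekindSymbol ((μ : ℝ) / (p : ℝ)) * dedekindSymbol ((q : ℝ) * (μ : ℝ) / (p : ℝ)))
          * (4 * (p : ℝ)^2)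
        = ((4 * ((μ : ℤ) * ((q * μ) % p)) - 2 * (p : ℤ) * μ - 2 * (p : ℤ) * ((q * μ) % p)
            + (p : ℤ)^2 : ℤ) : ℝ) := by
      intro μ hμ
      rw [mem_Ico] at hμ
      have hμ0 : 0 < μ := hμ.1
      have hμp : μ < p := hμ.2
      have hnd : ¬ ((p : ℤ) ∣ q * μ) := hndvd μ hμ0 hμp
      have hnint1 : ¬ ∃ n : ℤ, (μ : ℝ) / (p : ℝ) = (n : ℝ) := by
        rintro ⟨n, hn⟩
        rw [div_eq_iff hpR] at hn
        have hZ : (μ : ℤ) = n * p := by exact_mod_cast hn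
        have : (p : ℤ) ∣ (μ : ℤ) := ⟨n, by linarith⟩
        have := Nat.le_of_dvd hμ0 (Int.natCast_dvd_natCast.mp this)
        omega
      have hnint2 : ¬ ∃ n : ℤ, (q : ℝ) * (μ : ℝ) / (p : ℝ) = (n : ℝ) := by
        rintro ⟨n, hn⟩
        rw [div_eq_iff hpR] at hn
        have hZ : q * (μ : ℤ) = n * p := by exact_mod_cast hn
        exact hnd ⟨n, by linarith⟩
      have hd1 : dedekindSymbol ((μ : ℝ) / (p : ℝ)) = (μ : ℝ) / (p : ℝ) - 1/2 := by
        rw [dedekindSymbol, if_neg hnint1, Int.fract_eq_self.mpr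
          ⟨by positivity, by rw [div_lt_one (by positivity)]; exact_mod_cast hμp⟩]
      have hd2 : dedekindSymbol ((q : ℝ) * (μ : ℝ) / (p : ℝ))
          = (((q * μ) % p : ℤ) : ℝ) / (p : ℝ) - 1/2 := by
        rw [dedekindSymbol, if_neg hnint2]
        have he : (q : ℝ) * (μ : ℝ) / (p : ℝ) = ((q * (μ : ℤ) : ℤ) : ℝ) / ((p : ℕ) : ℝ) := by
          push_cast; ring
        rw [he, Int.fract_div_intCast_eq_div_intCast_mod]
      rw [hd1, hd2]
      push_cast
      field_simp
      ring
    rw [dedekindSum, Finset.sum_mul,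
      sum_range_split p hp0 (fun μ => (dedekindSymbol ((μ : ℝ) / (p : ℝ))
        * dedekindSymbol ((q : ℝ) * (μ : ℝ) / (p : ℝ))) * (4 * (p : ℝ)^2)),
      Finset.sum_congr rfl hterm]
    have h0 : dedekindSymbol ((0 : ℕ) / (p : ℝ)) = 0 := by
      rw [dedekindSymbol, if_pos ⟨0, by simp⟩]
    rw [Nat.cast_zero] at h0 ⊢
    rw [h0, zero_mul, zero_mul, zero_add]
    -- now sum the integer expression
    have e2 : ∑ μ ∈ Finset.Ico 1 p,
        (4 * ((μ : ℤ) * ((q * μ) % p)) - 2 * (p : ℤ) * μ - 2 * (p : ℤ) * ((q * μ) % p)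
          + (p : ℤ)^2 : ℤ)
        = 4 * A - 2 * (p : ℤ) * G - 2 * (p : ℤ) * C + (p : ℤ)^2 * ((p : ℤ) - 1) := by
      have e3 := sum_range_split p hp0 (fun μ =>
        (4 * ((μ : ℤ) * ((q * μ) % p)) - 2 * (p : ℤ) * μ - 2 * (p : ℤ) * ((q * μ) % p)
          + (p : ℤ)^2 : ℤ))
      simp only [Nat.cast_zero, mul_zero, Int.zero_emod, neg_zero, sub_zero, zero_add] at e3
      have e4 : ∑ μ ∈ Finset.Ico 1 p,
          (4 * ((μ : ℤ) * ((q * μ) % p)) - 2 * (p : ℤ) * μ - 2 * (p : ℤ) * ((q * μ) % p)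
            + (p : ℤ)^2 : ℤ)
          = (∑ μ ∈ range p,
          (4 * ((μ : ℤ) * ((q * μ) % p)) - 2 * (p : ℤ) * μ - 2 * (p : ℤ) * ((q * μ) % p)
            + (p : ℤ)^2 : ℤ)) - (p : ℤ)^2 := by
        rw [e3]; ring
      rw [e4]
      simp only [Finset.sum_add_distrib, Finset.sum_sub_distrib, ← Finset.mul_sum,
        Finset.sum_const, Finset.card_range, nsmul_eq_mul, ← hAdef, ← hGdef, ← hCdef]
      ring
    rw [← e2, ← Int.cast_sum]
  -- complex side
  set ω : ℂ := Complex.exp (2 * Real.pi * Complex.I / p) with hωdef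
  have hω : IsPrimitiveRoot ω p := Complex.isPrimitiveRoot_exp p hp0.ne'
  have hω0 : ω ≠ 0 := hω.ne_zero hp0.ne'
  have hparam : ∀ f : ℂ → ℂ, ∑ ζ ∈ nontrivialRootsOfUnity p, f ζ
      = (∑ a ∈ range p, f (ω ^ a)) - f 1 := by
    intro f
    have hroots : (Polynomial.nthRoots p (1 : ℂ)).toFinset
        = Finset.image (fun k => ω ^ k) (Finset.range p) := by
      rw [hω.nthRoots_eq (one_pow p)]
      ext x
      simp only [Multiset.mem_toFinset, Multiset.mem_map, Multiset.mem_range, mul_one,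
        Finset.mem_image, Finset.mem_range]
    have h1mem : (1 : ℂ) ∈ (Polynomial.nthRoots p (1 : ℂ)).toFinset := by
      rw [hroots]
      exact Finset.mem_image.mpr ⟨0, Finset.mem_range.mpr hp0, by simp⟩
    rw [nontrivialRootsOfUnity, Finset.sum_erase_eq_sub h1mem, hroots,
      Finset.sum_image (fun i hi j hj hij => hω.pow_inj (mem_range.mp hi) (mem_range.mp hj) hij)]
  have hchar : ∀ m : ℤ, ∑ a ∈ range p, (ω ^ m) ^ a = if (p : ℤ) ∣ m then (p : ℂ) else 0 := by
    intro m
    split_ifs with hd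
    · rw [(hω.zpow_eq_one_iff_dvd m).mpr hd]
      simp
    · have hne : ω ^ m ≠ 1 := fun h => hd ((hω.zpow_eq_one_iff_dvd m).mp h)
      rw [geom_sum_eq hne]
      have hmp : (ω ^ m) ^ p = 1 := by
        rw [← zpow_natCast (ω ^ m) p, ← zpow_mul, mul_comm, zpow_mul, zpow_natCast,
          hω.pow_eq_one, one_zpow]
      rw [hmp]; simp
  have hexp : ∀ a j k : ℕ, (ω ^ a) ^ j * ((ω ^ a) ^ q) ^ k
      = (ω ^ ((j : ℤ) + q * k)) ^ a := by
    intro a j k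
    rw [← zpow_natCast ω a, ← zpow_natCast _ j, ← zpow_natCast _ k, ← zpow_mul, ← zpow_mul,
      ← zpow_mul, ← zpow_natCast (ω ^ ((j : ℤ) + q * k)) a, ← zpow_mul, ← zpow_add₀ hω0]
    ring_nf
  -- per-root identity
  have h1 : ∀ ζ ∈ nontrivialRootsOfUnity p, (p : ℂ)^2 * (1 / ((ζ - 1) * (ζ ^ q - 1)))
      = (∑ j ∈ range p, (j : ℂ) * ζ ^ j) * (∑ k ∈ range p, (k : ℂ) * (ζ ^ q) ^ k) := by
    intro ζ hζ
    have hζ1 : ζ ≠ 1 := (Finset.mem_erase.mp hζ).1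
    have hζp : ζ ^ p = 1 := by
      have := (Finset.mem_erase.mp hζ).2
      rw [Multiset.mem_toFinset, Polynomial.mem_nthRoots hp0] at this
      exact this
    have hζ0 : ζ ≠ 0 := by
      intro h
      rw [h, zero_pow hp0.ne'] at hζp
      exact zero_ne_one hζp
    have hζq1 : ζ ^ q ≠ 1 := by
      intro hq1
      have ho1 : orderOf ζ ∣ p := orderOf_dvd_of_pow_eq_one hζp
      have hzq : ζ ^ q.natAbs = 1 := by
        rcases Int.natAbs_eq q with h | h
        · rw [← zpow_natCast ζ q.natAbs, ← h, hq1]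
        · rw [← zpow_natCast ζ q.natAbs]
          have : ζ ^ (-(q.natAbs : ℤ)) = 1 := by rw [← h, hq1]
          rw [zpow_neg] at this
          exact inv_eq_one.mp this
      have ho2 : orderOf ζ ∣ q.natAbs := orderOf_dvd_of_pow_eq_one hzq
      have hgd : orderOf ζ ∣ Nat.gcd q.natAbs p := Nat.dvd_gcd ho2 ho1
      have : Nat.gcd q.natAbs p = 1 := by
        rwa [Int.gcd, Int.natAbs_natCast] at hcop
      rw [this, Nat.dvd_one, orderOf_eq_one_iff] at hgd
      exact hζ1 hgd
    have hζqp : (ζ ^ q) ^ p = 1 := by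
      rw [← zpow_natCast (ζ ^ q) p, ← zpow_mul, mul_comm, zpow_mul, zpow_natCast, hζp, one_zpow]
    have K1 := key_sum p ζ hζp hζ1
    have K2 := key_sum p (ζ ^ q) hζqp hζq1
    have hm1 : ζ - 1 ≠ 0 := sub_ne_zero.mpr hζ1
    have hm2 : ζ ^ q - 1 ≠ 0 := sub_ne_zero.mpr hζq1
    rw [mul_one_div, div_eq_iff (mul_ne_zero hm1 hm2)]
    linear_combination (-((∑ k ∈ range p, (k : ℂ) * (ζ ^ q) ^ k) * (ζ ^ q - 1))) * K1
      - (p : ℂ) * K2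
  -- the inner j-sum
  have hinner2 : ∀ k ∈ range p,
      (∑ j ∈ range p, (j : ℂ) * (k : ℂ) * (if (p : ℤ) ∣ ((j : ℤ) + q * k) then (p : ℂ) else 0))
      = (k : ℂ) * ((((-(q * (k : ℤ))) % p : ℤ) : ℂ) * p) := by
    intro k hk
    set j₀ : ℕ := ((-(q * (k : ℤ))) % p).toNat with hj₀
    have hj₀nn : (0 : ℤ) ≤ (-(q * (k : ℤ))) % p := Int.emod_nonneg _ hpZ.ne'
    have hj₀eq : (j₀ : ℤ) = (-(q * (k : ℤ))) % p := Int.toNat_of_nonneg hj₀nn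
    have hj₀lt : j₀ < p := by
      have := Int.emod_lt_of_pos (-(q * (k : ℤ))) hpZ
      omega
    have hd2 : (p : ℤ) ∣ ((j₀ : ℤ) + q * k) := by
      apply Int.dvd_of_emod_eq_zero
      rw [hj₀eq, Int.emod_add_emod]
      simp
    rw [Finset.sum_eq_single_of_mem j₀ (mem_range.mpr hj₀lt)]
    · rw [if_pos hd2]
      have hcast : ((j₀ : ℕ) : ℂ) = (((-(q * (k : ℤ))) % p : ℤ) : ℂ) := by
        exact_mod_cast congrArg (fun z : ℤ => (z : ℂ)) hj₀eq
      rw [hcast]; ring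
    · intro j hjmem hjne
      rcases em ((p : ℤ) ∣ ((j : ℤ) + q * k)) with hdv | hdv
      · exfalso
        have hd3 : (p : ℤ) ∣ ((j : ℤ) - (j₀ : ℤ)) := by
          have := dvd_sub hdv hd2
          simpa using this
        have hjp := mem_range.mp hjmem
        have hlt : |(j : ℤ) - (j₀ : ℤ)| < p := by
          rw [abs_lt]
          constructor <;> omega
        have := Int.eq_zero_of_abs_lt_dvd hd3 hlt
        have : j = j₀ := by omega
        exact hjne this
      · rw [if_neg hdv, mul_zero]
  -- main complex computation
  set Ssum : ℂ := ∑ ζ ∈ nontrivialRootsOfUnity p, 1 / ((ζ - 1) * (ζ ^ q - 1)) with hSdef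
  have hGC : (G : ℂ) = ∑ j ∈ range p, (j : ℂ) := by rw [hGdef]; push_cast; rfl
  have hS : (p : ℂ)^2 * Ssum = (A' : ℂ) * p - (G : ℂ)^2 := by
    rw [hSdef, Finset.mul_sum, Finset.sum_congr rfl h1,
      hparam (fun ζ => (∑ j ∈ range p, (j : ℂ) * ζ ^ j) * (∑ k ∈ range p, (k : ℂ) * (ζ ^ q) ^ k))]
    have hone : (∑ j ∈ range p, (j : ℂ) * (1 : ℂ) ^ j)
        * (∑ k ∈ range p, (k : ℂ) * ((1 : ℂ) ^ q) ^ k) = (G : ℂ)^2 := by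
      simp only [one_pow, one_zpow, mul_one, ← hGC]
      ring
    rw [hone]
    congr 1
    calc ∑ a ∈ range p, (∑ j ∈ range p, (j : ℂ) * (ω ^ a) ^ j)
          * (∑ k ∈ range p, (k : ℂ) * ((ω ^ a) ^ q) ^ k)
        = ∑ a ∈ range p, ∑ j ∈ range p, ∑ k ∈ range p,
            (j : ℂ) * (k : ℂ) * (ω ^ ((j : ℤ) + q * k)) ^ a := by
          apply Finset.sum_congr rfl
          intro a _
          rw [Finset.sum_mul_sum]
          apply Finset.sum_congr rfl
          intro j _
          apply Finset.sum_congr rfl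
          intro k _
          linear_combination ((j : ℂ) * (k : ℂ)) * hexp a j k
      _ = ∑ j ∈ range p, ∑ k ∈ range p, ∑ a ∈ range p,
            (j : ℂ) * (k : ℂ) * (ω ^ ((j : ℤ) + q * k)) ^ a := by
          rw [Finset.sum_comm]
          exact Finset.sum_congr rfl fun j _ => Finset.sum_comm
      _ = ∑ j ∈ range p, ∑ k ∈ range p,
            (j : ℂ) * (k : ℂ) * (if (p : ℤ) ∣ ((j : ℤ) + q * k) then (p : ℂ) else 0) := by
          simp only [← Finset.mul_sum, hchar]
      _ = ∑ k ∈ range p, ∑ j ∈ range p,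
            (j : ℂ) * (k : ℂ) * (if (p : ℤ) ∣ ((j : ℤ) + q * k) then (p : ℂ) else 0) :=
          Finset.sum_comm
      _ = ∑ k ∈ range p, (k : ℂ) * ((((-(q * (k : ℤ))) % p : ℤ) : ℂ) * p) :=
          Finset.sum_congr rfl hinner2
      _ = (A' : ℂ) * p := by
          rw [hA'def]
          push_cast
          rw [Finset.sum_mul]
          apply Finset.sum_congr rfl
          intro k _
          ring
  -- final assembly
  have hsC : (dedekindSum q p : ℂ) * (4 * (p : ℂ)^2)
      = 4 * (A : ℂ) - 2 * (p : ℂ) * (G : ℂ) - 2 * (p : ℂ) * (C : ℂ)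
        + (p : ℂ)^2 * ((p : ℂ) - 1) := by
    have := congrArg (fun x : ℝ => (x : ℂ)) hs
    push_cast at this ⊢
    linear_combination this
  have hGCc : 2 * (G : ℂ) = (p : ℂ) * ((p : ℂ) - 1) := by exact_mod_cast hG
  have hAA'c : (A : ℂ) + (A' : ℂ) = (p : ℂ) * (G : ℂ) := by exact_mod_cast hAA'
  have hCGc : (C : ℂ) = (G : ℂ) := by exact_mod_cast hCG
  have hfinal : 4 * (p : ℂ)^2 * Ssum
      = -(dedekindSum q p : ℂ) * (4 * (p : ℂ)^3) + (p : ℂ)^2 * ((p : ℂ) - 1) := by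
    linear_combination 4 * hS + (p : ℂ) * hsC + (4 * (p : ℂ)) * hAA'c
      + (-2 * (p : ℂ)^2) * hCGc + (-(2 * (G : ℂ) + (p : ℂ) * ((p : ℂ) - 1))) * hGCc
  have hfinal3 : 4 * (p : ℂ) * Ssum
      = -(dedekindSum q p : ℂ) * (4 * (p : ℂ)^2) + (p : ℂ) * ((p : ℂ) - 1) := by
    apply mul_left_cancel₀ hpC
    linear_combination hfinal
  rw [show ((-dedekindSum q p + ((p : ℝ) - 1) / (4 * (p : ℝ)) : ℝ) : ℂ)
      = -(dedekindSum q p : ℂ) + ((p : ℂ) - 1) / (4 * (p : ℂ)) by push_cast; ring]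
  field_simp
  apply mul_left_cancel₀ hpC
  linear_combination hfinal3
end

section
/- For coprime integers p > 1 and q, (1/p) · Σ' ((ζ+1)/(ζ−1)) · ((ζ^q+1)/(ζ^q−1)) = −4 s(q,p), where the primed sum runs over all p-th roots of unity ζ ≠ 1 in ℂ. -/
open scoped Classical

lemma ds_add_int (x : ℝ) (n : ℤ) : dedekindSymbol (x + n) = dedekindSymbol x := by
  unfold dedekindSymbol
  have h : (∃ m : ℤ, x + (n:ℝ) = m) ↔ ∃ m : ℤ, x = m := by
    constructor
    · rintro ⟨m, hm⟩; exact ⟨m - n, by push_cast; linarith⟩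
    · rintro ⟨m, hm⟩; exact ⟨m + n, by push_cast; linarith⟩
  rw [Int.fract_add_intCast]
  simp only [h]

lemma ds_neg (x : ℝ) : dedekindSymbol (-x) = -dedekindSymbol x := by
  unfold dedekindSymbol
  by_cases h : ∃ n : ℤ, x = (n : ℝ)
  · obtain ⟨n, hn⟩ := h
    have h : ∃ n : ℤ, x = (n : ℝ) := ⟨n, hn⟩
    have h' : ∃ m : ℤ, -x = (m : ℝ) := ⟨-n, by rw [hn]; push_cast; ring⟩
    simp [h, h']
  · have h' : ¬ ∃ n : ℤ, -x = (n : ℝ) := by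
      rintro ⟨n, hn⟩; exact h ⟨-n, by push_cast; linarith⟩
    have hf : Int.fract x ≠ 0 := by
      intro hf
      exact h ⟨⌊x⌋, by have := Int.fract_add_floor x; rw [hf] at this; linarith⟩
    rw [if_neg h, if_neg h', Int.fract_neg hf]
    ring

lemma ds_formula (p j : ℕ) (hp : 0 < p) (hj : j < p) :
    dedekindSymbol ((j : ℝ) / p) = if j = 0 then 0 else (j : ℝ) / p - 1/2 := by
  rcases Nat.eq_zero_or_pos j with rfl | hj0
  · simp [dedekindSymbol]
    exact ⟨0, by simp⟩
  · rw [if_neg hj0.ne']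
    have hp' : (0:ℝ) < p := by exact_mod_cast hp
    have h1 : (0:ℝ) < (j:ℝ)/p := by positivity
    have h2 : (j:ℝ)/p < 1 := by
      rw [div_lt_one hp']; exact_mod_cast hj
    unfold dedekindSymbol
    rw [if_neg, Int.fract_eq_self.2 ⟨le_of_lt h1, h2⟩]
    rintro ⟨n, hn⟩
    rw [hn] at h1 h2
    have : (0:ℤ) < n := by exact_mod_cast h1
    have : n < 1 := by exact_mod_cast h2
    omega

lemma ds_sum_zero (p : ℕ) (hp : 0 < p) :
    ∑ j ∈ Finset.range p, dedekindSymbol ((j : ℝ) / p) = 0 := by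
  have hp' : (0:ℝ) < p := by exact_mod_cast hp
  have key : ∀ j ∈ Finset.range p,
      dedekindSymbol ((j : ℝ) / p) = ((j:ℝ)/p - 1/2) + (if j = 0 then 1/2 else 0) := by
    intro j hj
    rw [ds_formula p j hp (Finset.mem_range.mp hj)]
    by_cases h : j = 0 <;> simp [h]
  rw [Finset.sum_congr rfl key, Finset.sum_add_distrib]
  rw [Finset.sum_ite_eq' (Finset.range p) 0 (fun _ => (1/2:ℝ))]
  rw [if_pos (Finset.mem_range.mpr hp)]
  have hs : (∑ j ∈ Finset.range p, ((j:ℝ)/p - 1/2))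
      = (∑ j ∈ Finset.range p, (j:ℕ) : ℕ) / p - p/2 := by
    rw [Finset.sum_sub_distrib, ← Finset.sum_div, Finset.sum_const, Finset.card_range]
    push_cast [nsmul_eq_mul]
    ring
  rw [hs]
  have h2 : ((∑ j ∈ Finset.range p, j) : ℝ) * 2 = (p:ℝ) * (p - 1) := by
    have := Finset.sum_range_id_mul_two p
    have := congrArg (Nat.cast : ℕ → ℝ) this
    push_cast [Nat.cast_sub hp] at this
    convert this using 2
  field_simp
  push_cast
  linarith [h2]

open Finset Complex

lemma keyaux (ζ : ℂ) (n : ℕ) :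
    (ζ - 1) * ∑ j ∈ range n, (j : ℂ) * ζ ^ j
      = ((n : ℂ) - 1) * ζ ^ n - ∑ j ∈ range n, ζ ^ j + 1 := by
  induction n with
  | zero => simp
  | succ n ih =>
    rw [sum_range_succ, sum_range_succ (fun j => ζ ^ j), mul_add, ih]
    push_cast
    ring

lemma geom_zero {p : ℕ} (ζ : ℂ) (h1 : ζ ^ p = 1) (hne : ζ ≠ 1) :
    ∑ j ∈ range p, ζ ^ j = 0 := by
  have := geom_sum_mul ζ p
  rw [h1, sub_self] at this
  rcases mul_eq_zero.mp this with h | h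
  · exact h
  · exact absurd (sub_eq_zero.mp h) hne

lemma jsum {p : ℕ} (ζ : ℂ) (h1 : ζ ^ p = 1) (hne : ζ ≠ 1) :
    ∑ j ∈ range p, (j : ℂ) * ζ ^ j = (p : ℂ) / (ζ - 1) := by
  have hz : ζ - 1 ≠ 0 := sub_ne_zero.mpr hne
  rw [eq_div_iff hz, mul_comm, keyaux, h1, geom_zero ζ h1 hne]
  ring

lemma myFourier {p : ℕ} (hp : 0 < p) (ζ : ℂ) (h1 : ζ ^ p = 1) :
    (ζ + 1) / (ζ - 1)
      = 2 * ∑ j ∈ range p, (dedekindSymbol ((j : ℝ) / p) : ℂ) * ζ ^ j := by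
  by_cases hne : ζ = 1
  · subst hne
    simp only [one_pow, mul_one, sub_self, div_zero]
    rw [← Complex.ofReal_sum, ds_sum_zero p hp]
    simp
  · have hz : ζ - 1 ≠ 0 := sub_ne_zero.mpr hne
    have hp' : (p : ℂ) ≠ 0 := by exact_mod_cast hp.ne'
    have step : ∀ j ∈ range p,
        (dedekindSymbol ((j : ℝ) / p) : ℂ) * ζ ^ j
          = ((j : ℂ)/p) * ζ ^ j - (1/2) * ζ ^ j + (if j = 0 then (1/2 : ℂ) else 0) := by
      intro j hj
      rw [ds_formula p j hp (mem_range.mp hj)]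
      by_cases h : j = 0
      · subst h; simp
      · rw [if_neg h, if_neg h]
        push_cast
        ring
    rw [sum_congr rfl step, sum_add_distrib, sum_sub_distrib,
      Finset.sum_ite_eq' (range p) 0 (fun _ => (1/2:ℂ)), if_pos (mem_range.mpr hp)]
    have e1 : ∑ j ∈ range p, ((j : ℂ)/p) * ζ ^ j = 1 / (ζ - 1) := by
      have : ∑ j ∈ range p, ((j : ℂ)/p) * ζ ^ j
          = (∑ j ∈ range p, (j : ℂ) * ζ ^ j) / p := by
        rw [Finset.sum_div]
        exact sum_congr rfl fun j _ => by ring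
      rw [this, jsum ζ h1 hne, div_div, mul_comm, ← div_div]
      rw [div_self hp']
    have e2 : ∑ j ∈ range p, (1/2 : ℂ) * ζ ^ j = 0 := by
      rw [← Finset.mul_sum, geom_zero ζ h1 hne, mul_zero]
    rw [e1, e2]
    field_simp
    ring

lemma roots_eq (p : ℕ) (hp : 0 < p) {ω : ℂ} (hω : IsPrimitiveRoot ω p) :
    (Polynomial.nthRoots p (1 : ℂ)).toFinset
      = Finset.image (fun i => ω ^ i) (range p) := by
  haveI : NeZero p := ⟨hp.ne'⟩
  ext x
  simp only [Multiset.mem_toFinset, Polynomial.mem_nthRoots hp, Finset.mem_image,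
    Finset.mem_range]
  constructor
  · intro hx
    obtain ⟨i, hi, hix⟩ := hω.eq_pow_of_pow_eq_one hx
    exact ⟨i, hi, hix⟩
  · rintro ⟨i, hi, rfl⟩
    rw [← pow_mul, mul_comm, pow_mul, hω.pow_eq_one, one_pow]

lemma dft (p : ℕ) (hp : 0 < p) (m : ℕ) :
    ∑ ζ ∈ (Polynomial.nthRoots p (1 : ℂ)).toFinset, ζ ^ m
      = if p ∣ m then (p : ℂ) else 0 := by
  obtain ⟨ω, hω⟩ : ∃ ω : ℂ, IsPrimitiveRoot ω p :=
    ⟨_, Complex.isPrimitiveRoot_exp p hp.ne'⟩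
  rw [roots_eq p hp hω, Finset.sum_image
    (fun a ha b hb h => hω.pow_inj (mem_range.mp ha) (mem_range.mp hb) h)]
  have hrw : ∀ i ∈ range p, (ω ^ i) ^ m = (ω ^ m) ^ i := by
    intro i _; rw [← pow_mul, mul_comm, pow_mul]
  rw [sum_congr rfl hrw]
  by_cases hd : p ∣ m
  · rw [if_pos hd, (hω.pow_eq_one_iff_dvd m).mpr hd]
    simp
  · rw [if_neg hd]
    have hne : ω ^ m ≠ 1 := fun h => hd ((hω.pow_eq_one_iff_dvd m).mp h)
    have h1 : (ω ^ m) ^ p = 1 := by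
      rw [← pow_mul, mul_comm, pow_mul, hω.pow_eq_one, one_pow]
    exact geom_zero _ h1 hne
theorem cotangent_dedekind_sum (p : ℕ) (q : ℤ) (hp : 1 < p) (hcop : Int.gcd q (p : ℤ) = 1) :
    (1 / (p : ℂ)) * ∑ ζ ∈ nontrivialRootsOfUnity p,
        ((ζ + 1) / (ζ - 1)) * ((ζ ^ q + 1) / (ζ ^ q - 1)) =
      ((-4 * dedekindSum q p : ℝ) : ℂ) := by
  have hp0 : 0 < p := by omega
  haveI : NeZero p := ⟨hp0.ne'⟩
  have hpZ : ((p : ℤ)) ≠ 0 := by exact_mod_cast hp0.ne'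
  have hpC : (p : ℂ) ≠ 0 := by exact_mod_cast hp0.ne'
  set T := (Polynomial.nthRoots p (1 : ℂ)).toFinset with hT
  set r : ℕ := (q % (p : ℤ)).toNat with hrdef
  have hqr : (q % (p : ℤ)) = (r : ℤ) :=
    (Int.toNat_of_nonneg (Int.emod_nonneg q hpZ)).symm
  set c : ℕ → ℝ := fun j => dedekindSymbol ((j : ℝ) / p) with hcdef
  have hmem : ∀ ζ ∈ T, ζ ^ p = 1 := fun ζ hζ =>
    (Polynomial.mem_nthRoots hp0).mp (Multiset.mem_toFinset.mp hζ)
  -- step 1: add back ζ = 1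
  have h1 : ∑ ζ ∈ nontrivialRootsOfUnity p,
        ((ζ + 1) / (ζ - 1)) * ((ζ ^ q + 1) / (ζ ^ q - 1))
      = ∑ ζ ∈ T, ((ζ + 1) / (ζ - 1)) * ((ζ ^ q + 1) / (ζ ^ q - 1)) := by
    refine Finset.sum_erase T ?_
    norm_num
  -- step 2: zpow to pow
  have hzq : ∀ ζ ∈ T, ζ ^ q = ζ ^ r := by
    intro ζ hζ
    have hζ0 : ζ ≠ 0 := by
      intro h
      have := hmem ζ hζ
      rw [h, zero_pow hp0.ne'] at this
      exact zero_ne_one this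
    have hq : q = (p : ℤ) * (q / (p : ℤ)) + (r : ℤ) := by
      rw [← hqr, Int.mul_ediv_add_emod]
    rw [hq, zpow_add₀ hζ0, zpow_mul, zpow_natCast, hmem ζ hζ, one_zpow, one_mul,
      zpow_natCast]
  -- step 3: Fourier expansion of each summand
  have hc : ∀ ζ ∈ T, ((ζ + 1) / (ζ - 1)) * ((ζ ^ q + 1) / (ζ ^ q - 1))
      = 4 * ∑ j ∈ Finset.range p, ∑ k ∈ Finset.range p,
          (c j : ℂ) * (c k : ℂ) * ζ ^ (j + r * k) := by
    intro ζ hζ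
    have h1ζ := hmem ζ hζ
    have hζr : (ζ ^ r) ^ p = 1 := by rw [← pow_mul, mul_comm, pow_mul, h1ζ, one_pow]
    rw [hzq ζ hζ, myFourier hp0 ζ h1ζ, myFourier hp0 (ζ ^ r) hζr]
    have hrw : ∀ k ∈ Finset.range p, (dedekindSymbol ((k:ℝ)/p) : ℂ) * (ζ ^ r) ^ k
        = (c k : ℂ) * ζ ^ (r * k) := by
      intro k _; rw [pow_mul]
    rw [Finset.sum_congr rfl hrw, mul_mul_mul_comm, Finset.sum_mul_sum]
    norm_num
    refine Finset.sum_congr rfl fun j _ => Finset.sum_congr rfl fun k _ => ?_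
    rw [pow_add]
    ring
  rw [h1, Finset.sum_congr rfl hc, ← Finset.mul_sum]
  -- step 4: swap sums and apply DFT
  have hswap : ∑ ζ ∈ T, ∑ j ∈ Finset.range p, ∑ k ∈ Finset.range p,
        (c j : ℂ) * (c k : ℂ) * ζ ^ (j + r * k)
      = ∑ k ∈ Finset.range p, ∑ j ∈ Finset.range p,
          (c j : ℂ) * (c k : ℂ) * (if p ∣ j + r * k then (p : ℂ) else 0) := by
    rw [Finset.sum_comm]
    have inner : ∀ j ∈ Finset.range p,
        (∑ ζ ∈ T, ∑ k ∈ Finset.range p, (c j : ℂ) * (c k : ℂ) * ζ ^ (j + r * k))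
          = ∑ k ∈ Finset.range p,
              (c j : ℂ) * (c k : ℂ) * (if p ∣ j + r * k then (p : ℂ) else 0) := by
      intro j _
      rw [Finset.sum_comm]
      exact Finset.sum_congr rfl fun k _ => by rw [← Finset.mul_sum, dft p hp0]
    rw [Finset.sum_congr rfl inner, Finset.sum_comm]
  rw [hswap]
  -- step 5: pick out the unique j
  set j0 : ℕ → ℕ := fun k => (-(((r * k : ℕ) : ZMod p))).val with hj0def
  have hj0lt : ∀ k, j0 k < p := fun k => ZMod.val_lt _
  have hj0cast : ∀ k, ((j0 k : ℕ) : ZMod p) = -(((r * k : ℕ)) : ZMod p) := fun k =>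
    ZMod.natCast_zmod_val _
  have hdvd : ∀ k, p ∣ j0 k + r * k := by
    intro k
    rw [← ZMod.natCast_eq_zero_iff, Nat.cast_add, hj0cast, neg_add_cancel]
  have huniq : ∀ k, ∀ j < p, p ∣ j + r * k → j = j0 k := by
    intro k j hj hd
    have h0 : ((j + r * k : ℕ) : ZMod p) = 0 :=
      (ZMod.natCast_eq_zero_iff _ _).mpr hd
    rw [Nat.cast_add] at h0
    have hj' : ((j : ℕ) : ZMod p) = -(((r * k : ℕ)) : ZMod p) :=
      eq_neg_of_add_eq_zero_left h0
    have := ZMod.val_cast_of_lt hj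
    rw [hj'] at this
    exact this.symm
  have hpick : ∀ k ∈ Finset.range p,
      ∑ j ∈ Finset.range p, (c j : ℂ) * (c k : ℂ) * (if p ∣ j + r * k then (p : ℂ) else 0)
        = (c (j0 k) : ℂ) * (c k : ℂ) * p := by
    intro k _
    rw [Finset.sum_eq_single_of_mem (j0 k) (Finset.mem_range.mpr (hj0lt k))
      (fun j hj hne => by
        rw [if_neg (fun hd => hne (huniq k j (Finset.mem_range.mp hj) hd)), mul_zero]),
      if_pos (hdvd k)]
  rw [Finset.sum_congr rfl hpick]
  -- step 6: symbol identity
  have hsymb : ∀ k : ℕ, c (j0 k) = - dedekindSymbol ((q : ℝ) * k / p) := by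
    intro k
    have hpR : (0:ℝ) < p := by exact_mod_cast hp0
    obtain ⟨m, hm⟩ := hdvd k
    have e1 : ((j0 k : ℕ) : ℝ) / p = -(((r * k : ℕ) : ℝ) / p) + ((m : ℤ) : ℝ) := by
      have hm' : ((j0 k : ℕ) : ℝ) + ((r * k : ℕ) : ℝ) = (p : ℝ) * m := by
        exact_mod_cast congrArg (Nat.cast : ℕ → ℝ) hm
      push_cast at hm' ⊢
      field_simp
      linarith
    have e2 : (q : ℝ) * k / p = ((r * k : ℕ) : ℝ) / p + (((q / (p:ℤ)) * k : ℤ) : ℝ) := by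
      have hq : (q : ℝ) = (r : ℝ) + (p : ℝ) * (((q / (p:ℤ)) : ℤ) : ℝ) := by
        have := Int.emod_add_mul_ediv q (p : ℤ)
        rw [hqr] at this
        exact_mod_cast congrArg (Int.cast : ℤ → ℝ) this.symm
      rw [hq]
      push_cast
      field_simp
    show dedekindSymbol ((j0 k : ℝ) / p) = _
    rw [e1, ds_add_int, ds_neg, e2, ds_add_int]
  -- step 7: assemble
  have hreal : ∑ k ∈ Finset.range p, (c (j0 k) : ℂ) * (c k : ℂ) * (p : ℂ)
      = (((- dedekindSum q p) * p : ℝ) : ℂ) := by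
    have : ∑ k ∈ Finset.range p, c (j0 k) * c k * (p:ℝ) = (- dedekindSum q p) * p := by
      rw [← Finset.sum_mul]
      congr 1
      unfold dedekindSum
      rw [← Finset.sum_neg_distrib]
      refine Finset.sum_congr rfl fun k _ => ?_
      rw [hsymb k]
      show -dedekindSymbol ((q:ℝ)*k/p) * c k = _
      rw [hcdef]
      ring
    rw [← this]
    push_cast
    rfl
  rw [hreal]
  rw [show ((((- dedekindSum q p) * p : ℝ)) : ℂ) = ((- dedekindSum q p : ℝ) : ℂ) * (p:ℂ) by
    push_cast; ring]
  field_simp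
  push_cast
  ring
end
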